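/- With p_n the n-th prime, p_n^(1/n) - ((n+1)/n^2) Σ_{r ≤ n} p_r^(1/n) → 0 as n → ∞. -/

import Mathlib

open Filter Real

/-- `p n` is the n-th prime, 1-indexed: `p 1 = 2`. -/
noncomputable def p (n : ℕ) : ℕ := Nat.nth Nat.Prime (n - 1)

/-- Chebyshev-type bound: the central binomial coefficient is at most
`(2m)^(number of primes ≤ 2m)`. -/
lemma centralBinom_le_pow (m : ℕ) (hm : 0 < m) :
    Nat.centralBinom m ≤ (2 * m) ^ (Nat.count Nat.Prime (2 * m + 1)) := by
  have hne : Nat.centralBinom m ≠ 0 := Nat.centralBinom_ne_zero m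
  have hsub : (Nat.centralBinom m).factorization.support ⊆
      (2 * m + 1).primesBelow := by
    intro q hq
    have hprime : q.Prime := Nat.prime_of_mem_primeFactors (by
      rwa [← Nat.support_factorization])
    have hpos : 0 < (Nat.centralBinom m).factorization q := by
      rw [Finsupp.mem_support_iff] at hq; omega
    have hle : q ≤ 2 * m := Nat.le_two_mul_of_factorization_centralBinom_pos hpos
    exact Nat.mem_primesBelow.2 ⟨by omega, hprime⟩
  calc Nat.centralBinom m
      = ∏ q ∈ (Nat.centralBinom m).factorization.support,
          q ^ (Nat.centralBinom m).factorization q := by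
        conv_lhs => rw [← Nat.factorization_prod_pow_eq_self hne]
        rfl
    _ ≤ ∏ _q ∈ (Nat.centralBinom m).factorization.support, (2 * m) := by
        apply Finset.prod_le_prod'
        intro q _
        exact Nat.pow_factorization_choose_le (by omega)
    _ = (2 * m) ^ (Nat.centralBinom m).factorization.support.card :=
        Finset.prod_const _
    _ ≤ (2 * m) ^ (Nat.count Nat.Prime (2 * m + 1)) := by
        apply Nat.pow_le_pow_right (by omega)
        calc (Nat.centralBinom m).factorization.support.card
            ≤ (2 * m + 1).primesBelow.card := Finset.card_le_card hsub
          _ = Nat.count Nat.Prime (2 * m + 1) :=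
              Nat.primesBelow_card_eq_primeCounting' _

/-- The key Chebyshev inequality for the n-th prime. -/
lemma two_pow_p_le (n : ℕ) (hn : 6 ≤ n) : 2 ^ (p n + 1) ≤ (p n + 1) ^ (n + 1) := by
  set q := p n with hq
  have hqprime : q.Prime := Nat.prime_nth_prime (n - 1)
  have hq7 : 7 ≤ q := by
    have := Nat.add_two_le_nth_prime (n - 1)
    simp only [hq, p]
    omega
  have hodd : Odd q := hqprime.odd_of_ne_two (by omega)
  obtain ⟨k, hk⟩ := hodd
  set m := k + 1 with hm
  have h2m : 2 * m = q + 1 := by omega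
  have hm4 : 4 ≤ m := by omega
  -- count of primes below 2m+1 = q+2 is n
  have hcount : Nat.count Nat.Prime (2 * m + 1) = n := by
    have hnotp : ¬ (q + 1).Prime := by
      intro hpr
      have heven : Even (q + 1) := by
        refine ⟨k + 1, by omega⟩
      have := (Nat.Prime.even_iff hpr).1 heven
      omega
    have h1 : Nat.count Nat.Prime (q + 1 + 1) = Nat.count Nat.Prime (q + 1) := by
      rw [Nat.count_succ]
      simp [hnotp]
    have h2 : Nat.count Nat.Prime (q + 1) = n := by
      have h := Nat.count_nth_succ_of_infinite Nat.infinite_setOf_prime (n - 1)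
      show Nat.count Nat.Prime (Nat.nth Nat.Prime (n - 1) + 1) = n
      rw [h]
      omega
    rw [h2m]
    omega
  have hmain : 4 ^ m < m * Nat.centralBinom m :=
    Nat.four_pow_lt_mul_centralBinom m hm4
  have hcb : Nat.centralBinom m ≤ (2 * m) ^ n := by
    have := centralBinom_le_pow m (by omega)
    rwa [hcount] at this
  calc 2 ^ (q + 1) = 4 ^ m := by
        rw [show (4:ℕ) = 2 ^ 2 by norm_num, ← pow_mul]
        congr 1
        omega
    _ ≤ m * Nat.centralBinom m := hmain.le
    _ ≤ (2 * m) * (2 * m) ^ n := by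
        apply Nat.mul_le_mul (by omega) hcb
    _ = (2 * m) ^ (n + 1) := by ring
    _ = (q + 1) ^ (n + 1) := by rw [h2m]

/-- Polynomial bound on the n-th prime. -/
lemma p_le_poly (n : ℕ) (hn : 6 ≤ n) : (p n : ℝ) ≤ 9 * ((n : ℝ) + 1) ^ 2 := by
  have key := two_pow_p_le n hn
  set q := p n with hq
  have hq7 : 7 ≤ q := by
    have := Nat.add_two_le_nth_prime (n - 1)
    simp only [hq, p]
    omega
  set x : ℝ := (q : ℝ) + 1 with hx
  have hx8 : (8 : ℝ) ≤ x := by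
    simp only [hx]
    have : (7:ℝ) ≤ (q:ℝ) := by exact_mod_cast hq7
    linarith
  have hxpos : (0 : ℝ) < x := by linarith
  -- take logs
  have hcast : (2 : ℝ) ^ (q + 1) ≤ x ^ (n + 1) := by
    have := key
    have h2 : ((2 ^ (q + 1) : ℕ) : ℝ) ≤ (((q + 1) ^ (n + 1) : ℕ) : ℝ) := by
      exact_mod_cast this
    push_cast at h2
    convert h2 using 2
  have hlog : x * Real.log 2 ≤ ((n : ℝ) + 1) * Real.log x := by
    have h1 : Real.log ((2:ℝ) ^ (q + 1)) ≤ Real.log (x ^ (n + 1)) :=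
      Real.log_le_log (by positivity) hcast
    rw [Real.log_pow, Real.log_pow] at h1
    have : ((q:ℝ) + 1) * Real.log 2 ≤ ((n:ℝ) + 1) * Real.log x := by
      push_cast at h1 ⊢
      convert h1 using 2 <;> push_cast <;> ring
    simpa [hx] using this
  -- log x ≤ 2 √x
  have hs : Real.sqrt x > 0 := Real.sqrt_pos.2 hxpos
  have hlogx : Real.log x ≤ 2 * Real.sqrt x := by
    have h1 : Real.log (Real.sqrt x) = Real.log x / 2 :=
      Real.log_sqrt hxpos.le
    have h2 : Real.log (Real.sqrt x) ≤ Real.sqrt x - 1 :=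
      Real.log_le_sub_one_of_pos hs
    linarith
  have hlog2 : (0.6931471803 : ℝ) < Real.log 2 := Real.log_two_gt_d9
  have hxs : Real.sqrt x * Real.sqrt x = x := Real.mul_self_sqrt hxpos.le
  -- derive √x ≤ 3 (n+1)
  have hns : (0:ℝ) < (n:ℝ) + 1 := by positivity
  have hkey : Real.sqrt x * Real.log 2 ≤ 2 * ((n:ℝ) + 1) := by
    have h1 : Real.sqrt x * Real.sqrt x * Real.log 2 ≤
        ((n:ℝ) + 1) * (2 * Real.sqrt x) := by
      calc Real.sqrt x * Real.sqrt x * Real.log 2 = x * Real.log 2 := by rw [hxs]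
        _ ≤ ((n:ℝ) + 1) * Real.log x := hlog
        _ ≤ ((n:ℝ) + 1) * (2 * Real.sqrt x) := by
            apply mul_le_mul_of_nonneg_left hlogx hns.le
    nlinarith [hs]
  have hsqrt : Real.sqrt x ≤ 3 * ((n:ℝ) + 1) := by nlinarith
  have hxle : x ≤ 9 * ((n:ℝ) + 1) ^ 2 := by nlinarith [hs.le]
  simp only [hx] at hxle
  linarith

/-- `log (p n) / n → 0`. -/
lemma log_p_div_tendsto :
    Tendsto (fun n : ℕ => Real.log (p n) / n) atTop (nhds 0) := by
  have hupper : Tendsto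
      (fun n : ℕ => Real.log 9 / n + 4 * (Real.log ((n:ℝ) + 1) / ((n:ℝ) + 1)))
      atTop (nhds 0) := by
    have h1 : Tendsto (fun n : ℕ => Real.log 9 / n) atTop (nhds 0) :=
      tendsto_const_nhds.div_atTop tendsto_natCast_atTop_atTop
    have h2 : Tendsto (fun x : ℝ => Real.log x / x) atTop (nhds 0) :=
      Real.isLittleO_log_id_atTop.tendsto_div_nhds_zero
    have h3 : Tendsto (fun n : ℕ => ((n:ℝ) + 1)) atTop atTop :=
      tendsto_atTop_add_const_right _ _ tendsto_natCast_atTop_atTop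
    have h4 : Tendsto (fun n : ℕ => Real.log ((n:ℝ) + 1) / ((n:ℝ) + 1))
        atTop (nhds 0) := h2.comp h3
    have := h1.add ((h4.const_mul (4:ℝ)))
    simpa using this
  apply squeeze_zero' ?_ ?_ hupper
  · filter_upwards [eventually_ge_atTop 1] with n hn
    have hp1 : (1 : ℝ) ≤ (p n : ℝ) := by
      have : 2 ≤ p n := (Nat.prime_nth_prime (n-1)).two_le
      exact_mod_cast this.trans' (by norm_num)
    have : (0:ℝ) ≤ Real.log (p n) := Real.log_nonneg hp1
    positivity
  · filter_upwards [eventually_ge_atTop 6] with n hn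
    have hnp : (0:ℝ) < (n:ℝ) := by
      have : (6:ℝ) ≤ (n:ℝ) := by exact_mod_cast hn
      linarith
    have hple := p_le_poly n hn
    have hp2 : (2 : ℝ) ≤ (p n : ℝ) := by
      exact_mod_cast (Nat.prime_nth_prime (n-1)).two_le
    have hlogle : Real.log (p n) ≤ Real.log 9 + 2 * Real.log ((n:ℝ) + 1) := by
      calc Real.log (p n) ≤ Real.log (9 * ((n:ℝ) + 1)^2) :=
            Real.log_le_log (by linarith) hple
        _ = Real.log 9 + 2 * Real.log ((n:ℝ) + 1) := by
            rw [Real.log_mul (by norm_num) (by positivity), Real.log_pow]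
            push_cast; ring
    have hmono : Real.log (p n) / n ≤
        (Real.log 9 + 2 * Real.log ((n:ℝ) + 1)) / n :=
      by gcongr
    have hstep : (Real.log 9 + 2 * Real.log ((n:ℝ) + 1)) / n ≤
        Real.log 9 / n + 4 * (Real.log ((n:ℝ) + 1) / ((n:ℝ) + 1)) := by
      rw [add_div]
      have hln : (0:ℝ) ≤ Real.log ((n:ℝ) + 1) := Real.log_nonneg (by linarith)
      have : 2 * Real.log ((n:ℝ) + 1) / n ≤
          4 * (Real.log ((n:ℝ) + 1) / ((n:ℝ) + 1)) := by
        have e1 : 2 * Real.log ((n:ℝ) + 1) / n =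
            Real.log ((n:ℝ) + 1) * (2 / n) := by ring
        have e2 : 4 * (Real.log ((n:ℝ) + 1) / ((n:ℝ) + 1)) =
            Real.log ((n:ℝ) + 1) * (4 / ((n:ℝ) + 1)) := by ring
        rw [e1, e2]
        apply mul_le_mul_of_nonneg_left _ hln
        rw [div_le_div_iff₀ hnp (by linarith : (0:ℝ) < (n:ℝ) + 1)]
        have h6 : (6:ℝ) ≤ (n:ℝ) := by exact_mod_cast hn
        linarith
      linarith
    linarith

/-- `(p n)^(1/n) → 1`. -/
lemma p_rpow_tendsto :
    Tendsto (fun n : ℕ => (p n : ℝ) ^ ((1:ℝ)/n)) atTop (nhds 1) := by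
  have hcomp : Tendsto (fun n : ℕ => Real.exp (Real.log (p n) / n)) atTop
      (nhds 1) := by
    have := (Real.continuous_exp.tendsto 0).comp log_p_div_tendsto
    simpa [Function.comp_def] using this
  apply hcomp.congr
  intro n
  have hppos : (0:ℝ) < (p n : ℝ) := by
    exact_mod_cast (Nat.prime_nth_prime (n-1)).pos
  rw [Real.rpow_def_of_pos hppos, mul_one_div]

theorem stmt_7 :
    Tendsto
      (fun n : ℕ =>
        (p n : ℝ) ^ ((1 : ℝ) / n) -
          (((n : ℝ) + 1) / (n : ℝ) ^ 2) * ∑ r ∈ Finset.Icc 1 n, (p r : ℝ) ^ ((1 : ℝ) / n))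
      atTop (nhds 0) := by
  set f : ℕ → ℝ := fun n => (p n : ℝ) ^ ((1:ℝ)/n) with hf
  have hftend : Tendsto f atTop (nhds 1) := p_rpow_tendsto
  -- lower and upper bounding sequences
  have hg : Tendsto (fun n : ℕ => -(f n / n)) atTop (nhds 0) := by
    have := (hftend.mul tendsto_inv_atTop_nhds_zero_nat).neg
    simp only [mul_zero, neg_zero] at this
    apply this.congr
    intro n
    rw [div_eq_mul_inv]
  have hh : Tendsto (fun n : ℕ => f n - ((n:ℝ) + 1)/n) atTop (nhds 0) := by
    have h1 : Tendsto (fun n : ℕ => ((n:ℝ) + 1)/n) atTop (nhds 1) := by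
      have h2 : Tendsto (fun n : ℕ => 1 + (n:ℝ)⁻¹) atTop (nhds 1) := by
        have := tendsto_inv_atTop_nhds_zero_nat.const_add (1:ℝ)
        simpa using this
      apply h2.congr'
      filter_upwards [eventually_ge_atTop 1] with n hn
      have hn0 : (n:ℝ) ≠ 0 := by
        have : (1:ℝ) ≤ (n:ℝ) := by exact_mod_cast hn
        linarith
      field_simp
    have := hftend.sub h1
    simpa using this
  apply tendsto_of_tendsto_of_tendsto_of_le_of_le' hg hh
  · -- lower bound
    filter_upwards [eventually_ge_atTop 1] with n hn
    have hn0 : (0:ℝ) < (n:ℝ) := by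
      have : (1:ℝ) ≤ (n:ℝ) := by exact_mod_cast hn
      linarith
    have hfn1 : (1:ℝ) ≤ f n := by
      have hp1 : (1 : ℝ) ≤ (p n : ℝ) := by
        have : 2 ≤ p n := (Nat.prime_nth_prime (n-1)).two_le
        have : (2:ℝ) ≤ (p n : ℝ) := by exact_mod_cast this
        linarith
      calc (1:ℝ) = (1:ℝ) ^ ((1:ℝ)/n) := (Real.one_rpow _).symm
        _ ≤ (p n : ℝ) ^ ((1:ℝ)/n) :=
            Real.rpow_le_rpow (by norm_num) hp1 (by positivity)
    have hS2 : ∑ r ∈ Finset.Icc 1 n, (p r : ℝ) ^ ((1:ℝ)/n) ≤ n * f n := by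
      have hcard : (Finset.Icc 1 n).card = n := by
        rw [Nat.card_Icc]; omega
      calc ∑ r ∈ Finset.Icc 1 n, (p r : ℝ) ^ ((1:ℝ)/n)
          ≤ (Finset.Icc 1 n).card • f n := by
            apply Finset.sum_le_card_nsmul
            intro r hr
            rw [Finset.mem_Icc] at hr
            apply Real.rpow_le_rpow (by positivity) _ (by positivity)
            have : p r ≤ p n := by
              apply (Nat.nth_le_nth Nat.infinite_setOf_prime).2
              omega
            exact_mod_cast this
        _ = n * f n := by rw [hcard, nsmul_eq_mul]
    have hc : (0:ℝ) ≤ ((n:ℝ) + 1) / (n:ℝ)^2 := by positivity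
    have h1 : (((n:ℝ) + 1) / (n:ℝ)^2) * ∑ r ∈ Finset.Icc 1 n, (p r : ℝ) ^ ((1:ℝ)/n)
        ≤ (((n:ℝ) + 1) / (n:ℝ)^2) * (n * f n) :=
      mul_le_mul_of_nonneg_left hS2 hc
    have h2 : (((n:ℝ) + 1) / (n:ℝ)^2) * (n * f n) = f n + f n / n := by
      field_simp
    simp only [hf] at *
    linarith
  · -- upper bound
    filter_upwards [eventually_ge_atTop 1] with n hn
    have hn0 : (0:ℝ) < (n:ℝ) := by
      have : (1:ℝ) ≤ (n:ℝ) := by exact_mod_cast hn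
      linarith
    have hS1 : (n:ℝ) ≤ ∑ r ∈ Finset.Icc 1 n, (p r : ℝ) ^ ((1:ℝ)/n) := by
      have hcard : (Finset.Icc 1 n).card = n := by
        rw [Nat.card_Icc]; omega
      calc (n:ℝ) = (Finset.Icc 1 n).card • (1:ℝ) := by rw [hcard]; simp
        _ ≤ ∑ r ∈ Finset.Icc 1 n, (p r : ℝ) ^ ((1:ℝ)/n) := by
            apply Finset.card_nsmul_le_sum
            intro r hr
            have hp1 : (1 : ℝ) ≤ (p r : ℝ) := by
              have : 2 ≤ p r := (Nat.prime_nth_prime (r-1)).two_le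
              have : (2:ℝ) ≤ (p r : ℝ) := by exact_mod_cast this
              linarith
            calc (1:ℝ) = (1:ℝ) ^ ((1:ℝ)/n) := (Real.one_rpow _).symm
              _ ≤ (p r : ℝ) ^ ((1:ℝ)/n) :=
                  Real.rpow_le_rpow (by norm_num) hp1 (by positivity)
    have hc : (0:ℝ) ≤ ((n:ℝ) + 1) / (n:ℝ)^2 := by positivity
    have h1 : (((n:ℝ) + 1) / (n:ℝ)^2) * (n:ℝ)
        ≤ (((n:ℝ) + 1) / (n:ℝ)^2) * ∑ r ∈ Finset.Icc 1 n, (p r : ℝ) ^ ((1:ℝ)/n) :=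
      mul_le_mul_of_nonneg_left hS1 hc
    have h2 : (((n:ℝ) + 1) / (n:ℝ)^2) * (n:ℝ) = ((n:ℝ) + 1)/n := by
      field_simp
    simp only [hf] at *
    linarith
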